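/- Let m be a positive integer, M > 0, and μ ∈ ℝ^m with 0 ≤ μ_j ≤ M/2 for every j; set μ_min := min_j μ_j. Let Σ be a real symmetric m×m matrix, ε_μ ∈ ℝ, Y₁ a PSD real symmetric (m+1)×(m+1) matrix, and Y₂ a PSD real symmetric m×m matrix. Define p_Y(t) := ⟨B(t), Y₁⟩_F + ⟨(t−μ)(t−μ)ᵀ, Y₂⟩_F. Then p_Y is Lipschitz continuous on [0,M]^m with Lipschitz constant L = 2·Tr(Y₁) + 2·√m·(M − μ_min)·Tr(Y₂); that is, |p_Y(t) − p_Y(t′)| ≤ L·‖t − t′‖₂ for all t, t′ ∈ [0,M]^m. -/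

import Mathlib

open Matrix

open Finset


/-- Cauchy-Schwarz with absolute value. -/
lemma abs_sum_mul_le_aux {n : Type*} [Fintype n] (f g : n → ℝ) :
    |∑ i, f i * g i| ≤ Real.sqrt (∑ i, f i ^ 2) * Real.sqrt (∑ i, g i ^ 2) := by
  rw [abs_le]
  constructor
  · have h := Real.sum_mul_le_sqrt_mul_sqrt Finset.univ (fun i => -f i) g
    simp only [neg_mul, neg_sq] at h
    rw [Finset.sum_neg_distrib] at h
    linarith
  · exact Real.sum_mul_le_sqrt_mul_sqrt _ _ _

open scoped MatrixOrder in
lemma psd_exists_conjTranspose_mul {n : Type*} [Fintype n] {Y : Matrix n n ℝ}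
    (hY : Y.PosSemidef) : ∃ A : Matrix n n ℝ, Y = Aᴴ * A := by
  classical
  have hA : 0 ≤ Y := hY.nonneg
  obtain ⟨X, hX, -, hXY⟩ :=
    CFC.exists_sqrt_of_isSelfAdjoint_of_quasispectrumRestricts hY.isHermitian
      (QuasispectrumRestricts.nnreal_of_nonneg hA)
  exact ⟨X, by rw [← hXY, ← Matrix.star_eq_conjTranspose, hX.star_eq]⟩

/-- PSD bilinear form bound by trace. -/
lemma quad_bound {n : Type*} [Fintype n] [DecidableEq n] {Y : Matrix n n ℝ}
    (hY : Y.PosSemidef) (x y : n → ℝ) :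
    |∑ i, ∑ j, x i * y j * Y i j| ≤
      Y.trace * (Real.sqrt (∑ i, x i ^ 2) * Real.sqrt (∑ j, y j ^ 2)) := by
  obtain ⟨A, rfl⟩ := psd_exists_conjTranspose_mul hY
  have happ : ∀ i j, (Aᴴ * A) i j = ∑ k, A k i * A k j := by
    intro i j
    simp [Matrix.mul_apply, Matrix.conjTranspose_apply]
  have htr : (Aᴴ * A).trace = ∑ k, ∑ i, (A k i) ^ 2 := by
    rw [Matrix.trace]
    simp only [Matrix.diag_apply, happ, ← sq]
    exact Finset.sum_comm
  have htr0 : 0 ≤ (Aᴴ * A).trace := by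
    rw [htr]; positivity
  have key : ∑ i, ∑ j, x i * y j * (Aᴴ * A) i j
      = ∑ k, (∑ i, A k i * x i) * (∑ j, A k j * y j) := by
    have expand : ∀ k, (∑ i, A k i * x i) * (∑ j, A k j * y j)
        = ∑ i, ∑ j, x i * y j * (A k i * A k j) := by
      intro k
      rw [Finset.sum_mul_sum]
      exact Finset.sum_congr rfl fun i _ => Finset.sum_congr rfl fun j _ => by ring
    simp only [expand, happ, Finset.mul_sum]
    rw [show (∑ i, ∑ j, ∑ k, x i * y j * (A k i * A k j))
        = ∑ i, ∑ k, ∑ j, x i * y j * (A k i * A k j) from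
      Finset.sum_congr rfl fun i _ => Finset.sum_comm]
    exact Finset.sum_comm
  rw [key]
  have h1 := abs_sum_mul_le_aux (fun k => ∑ i, A k i * x i) (fun k => ∑ j, A k j * y j)
  refine h1.trans ?_
  have hx : Real.sqrt (∑ k, (∑ i, A k i * x i) ^ 2)
      ≤ Real.sqrt ((Aᴴ * A).trace * ∑ i, x i ^ 2) := by
    apply Real.sqrt_le_sqrt
    rw [htr, Finset.sum_mul]
    exact Finset.sum_le_sum fun k _ => Finset.sum_mul_sq_le_sq_mul_sq _ _ _
  have hy : Real.sqrt (∑ k, (∑ j, A k j * y j) ^ 2)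
      ≤ Real.sqrt ((Aᴴ * A).trace * ∑ j, y j ^ 2) := by
    apply Real.sqrt_le_sqrt
    rw [htr, Finset.sum_mul]
    exact Finset.sum_le_sum fun k _ => Finset.sum_mul_sq_le_sq_mul_sq _ _ _
  calc Real.sqrt (∑ k, (∑ i, A k i * x i) ^ 2) * Real.sqrt (∑ k, (∑ j, A k j * y j) ^ 2)
      ≤ Real.sqrt ((Aᴴ * A).trace * ∑ i, x i ^ 2)
        * Real.sqrt ((Aᴴ * A).trace * ∑ j, y j ^ 2) :=
        mul_le_mul hx hy (Real.sqrt_nonneg _) (Real.sqrt_nonneg _)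
    _ = (Aᴴ * A).trace * (Real.sqrt (∑ i, x i ^ 2) * Real.sqrt (∑ j, y j ^ 2)) := by
        rw [Real.sqrt_mul htr0, Real.sqrt_mul htr0]
        rw [show ∀ a b c : ℝ, a * b * (a * c) = a ^ 2 * (b * c) from fun a b c => by ring]
        rw [Real.sq_sqrt htr0]

lemma psd_trace_nonneg {n : Type*} [Fintype n] [DecidableEq n] {Y : Matrix n n ℝ}
    (hY : Y.PosSemidef) : 0 ≤ Y.trace := by
  obtain ⟨A, rfl⟩ := psd_exists_conjTranspose_mul hY
  rw [Matrix.trace]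
  apply Finset.sum_nonneg
  intro i _
  simp only [Matrix.diag_apply, Matrix.mul_apply, Matrix.conjTranspose_apply, star_trivial]
  exact Finset.sum_nonneg fun k _ => mul_self_nonneg _

lemma trace_transpose_mul' {n : Type*} [Fintype n] (X Y : Matrix n n ℝ) :
    (Xᵀ * Y).trace = ∑ i, ∑ j, X i j * Y i j := by
  rw [Matrix.trace]
  simp only [Matrix.diag_apply, Matrix.mul_apply, Matrix.transpose_apply]
  exact Finset.sum_comm

lemma S1_bound {m : ℕ} {Y : Matrix (Fin (m + 1)) (Fin (m + 1)) ℝ} (hY : Y.PosSemidef)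
    (d : Fin m → ℝ) :
    |∑ l, d l * Y l.castSucc (Fin.last m)| ≤ Y.trace * Real.sqrt (∑ l, d l ^ 2) := by
  set x : Fin (m + 1) → ℝ := Fin.snoc d 0 with hx
  set e : Fin (m + 1) → ℝ := fun j => if j = Fin.last m then 1 else 0 with he
  have h1 : ∑ i, ∑ j, x i * e j * Y i j = ∑ l, d l * Y l.castSucc (Fin.last m) := by
    have hinner : ∀ i, ∑ j, x i * e j * Y i j = x i * Y i (Fin.last m) := by
      intro i
      rw [Finset.sum_eq_single (Fin.last m)]
      · simp [he]
      · intro b _ hb; simp [he, hb]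
      · simp
    rw [Finset.sum_congr rfl fun i _ => hinner i, Fin.sum_univ_castSucc]
    simp [hx]
  have hx2 : ∑ i, x i ^ 2 = ∑ l, d l ^ 2 := by
    rw [Fin.sum_univ_castSucc]; simp [hx]
  have he2 : ∑ j, e j ^ 2 = 1 := by
    simp only [he, apply_ite (fun r : ℝ => r ^ 2), one_pow]
    simp
  have h := quad_bound hY x e
  rw [h1, hx2, he2] at h
  simpa using h

lemma S1_bound' {m : ℕ} {Y : Matrix (Fin (m + 1)) (Fin (m + 1)) ℝ} (hY : Y.PosSemidef)
    (d : Fin m → ℝ) :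
    |∑ l, d l * Y (Fin.last m) l.castSucc| ≤ Y.trace * Real.sqrt (∑ l, d l ^ 2) := by
  set x : Fin (m + 1) → ℝ := Fin.snoc d 0 with hx
  set e : Fin (m + 1) → ℝ := fun j => if j = Fin.last m then 1 else 0 with he
  have h1 : ∑ i, ∑ j, e i * x j * Y i j = ∑ l, d l * Y (Fin.last m) l.castSucc := by
    rw [Finset.sum_eq_single (Fin.last m)]
    · rw [show (∑ j, e (Fin.last m) * x j * Y (Fin.last m) j)
          = ∑ j, x j * Y (Fin.last m) j by
        refine Finset.sum_congr rfl fun j _ => ?_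
        simp [he]]
      rw [Fin.sum_univ_castSucc]
      simp [hx]
    · intro b _ hb
      simp [he, hb]
    · simp
  have hx2 : ∑ i, x i ^ 2 = ∑ l, d l ^ 2 := by
    rw [Fin.sum_univ_castSucc]; simp [hx]
  have he2 : ∑ j, e j ^ 2 = 1 := by
    simp only [he, apply_ite (fun r : ℝ => r ^ 2), one_pow]
    simp
  have h := quad_bound hY e x
  rw [h1, hx2, he2] at h
  simpa using h

/-- The symmetric block matrix `B(t) = [[Σ, v],[vᵀ, ε]]` of size `(m+1) × (m+1)`,
where `v = t - μ`. -/
def Bmat (m : ℕ) (S : Matrix (Fin m) (Fin m) ℝ) (v : Fin m → ℝ) (e : ℝ) :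
    Matrix (Fin (m + 1)) (Fin (m + 1)) ℝ :=
  Matrix.of fun i j =>
    if hi : (i : ℕ) < m then
      if hj : (j : ℕ) < m then S ⟨i, hi⟩ ⟨j, hj⟩ else v ⟨i, hi⟩
    else if hj : (j : ℕ) < m then v ⟨j, hj⟩ else e

lemma Bmat_sum {m : ℕ} (S : Matrix (Fin m) (Fin m) ℝ) (e : ℝ)
    (Y : Matrix (Fin (m + 1)) (Fin (m + 1)) ℝ) (v : Fin m → ℝ) :
    ∑ i, ∑ j, Bmat m S v e i j * Y i j
      = ((∑ i : Fin m, ∑ j : Fin m, S i j * Y i.castSucc j.castSucc)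
          + e * Y (Fin.last m) (Fin.last m))
        + ∑ l : Fin m,
            (v l * Y l.castSucc (Fin.last m) + v l * Y (Fin.last m) l.castSucc) := by
  rw [Fin.sum_univ_castSucc]
  have inner1 : ∀ i : Fin m, ∑ j, Bmat m S v e i.castSucc j * Y i.castSucc j
      = (∑ j : Fin m, S i j * Y i.castSucc j.castSucc)
          + v i * Y i.castSucc (Fin.last m) := by
    intro i
    rw [Fin.sum_univ_castSucc]
    simp [Bmat, Fin.is_lt]
  have inner2 : ∑ j, Bmat m S v e (Fin.last m) j * Y (Fin.last m) j
      = (∑ j : Fin m, v j * Y (Fin.last m) j.castSucc)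
          + e * Y (Fin.last m) (Fin.last m) := by
    rw [Fin.sum_univ_castSucc]
    simp [Bmat, Fin.is_lt]
  rw [inner2, Finset.sum_congr rfl fun i _ => inner1 i,
    Finset.sum_add_distrib, Finset.sum_add_distrib]
  ring

/-- explicit Lipschitz constant `L = 2·Tr(Y₁) + 2·√m·(M − μ_min)·Tr(Y₂)` for the
polynomial part `p_Y(t) = ⟨B(t), Y₁⟩_F + ⟨(t−μ)(t−μ)ᵀ, Y₂⟩_F` on the box `[0, M]^m`. -/
theorem lipschitz_constant_of_pY
    {m : ℕ} (hm : 0 < m) (M : ℝ) (hM : 0 < M)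
    (μ : Fin m → ℝ) (hμ : ∀ j, 0 ≤ μ j ∧ μ j ≤ M / 2)
    (μmin : ℝ) (hμmin_le : ∀ j, μmin ≤ μ j) (hμmin_mem : ∃ j, μ j = μmin)
    (Sig : Matrix (Fin m) (Fin m) ℝ) (hSig : Sig.IsSymm) (εμ : ℝ)
    (Y₁ : Matrix (Fin (m + 1)) (Fin (m + 1)) ℝ) (hY₁ : Y₁.PosSemidef)
    (Y₂ : Matrix (Fin m) (Fin m) ℝ) (hY₂ : Y₂.PosSemidef)
    (p : EuclideanSpace ℝ (Fin m) → ℝ)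
    (hp : ∀ t, p t =
      ((Bmat m Sig (fun l => t l - μ l) εμ)ᵀ * Y₁).trace
        + ((Matrix.vecMulVec (fun l => t l - μ l) (fun l => t l - μ l))ᵀ * Y₂).trace) :
    ∀ t t' : EuclideanSpace ℝ (Fin m),
      (∀ j, t j ∈ Set.Icc (0 : ℝ) M) → (∀ j, t' j ∈ Set.Icc (0 : ℝ) M) →
      |p t - p t'| ≤
        (2 * Y₁.trace + 2 * Real.sqrt m * (M - μmin) * Y₂.trace) * ‖t - t'‖ := by
  intro t t' ht ht'
  obtain ⟨j₀, hj₀⟩ := hμmin_mem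
  have hμmin_le_M2 : μmin ≤ M / 2 := hj₀ ▸ (hμ j₀).2
  have hμmin0 : 0 ≤ μmin := le_trans (by linarith [(hμ j₀).1, hμmin_le j₀]) le_rfl
  have hMμ : 0 ≤ M - μmin := by linarith
  set N := Real.sqrt (∑ l, (t l - t' l) ^ 2) with hN
  have hN0 : 0 ≤ N := Real.sqrt_nonneg _
  have hnorm : ‖t - t'‖ = N := by
    rw [hN, EuclideanSpace.norm_eq]
    congr 1
    refine Finset.sum_congr rfl fun l _ => ?_
    rw [Real.norm_eq_abs, sq_abs]
    norm_num [PiLp.sub_apply]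
  -- difference of p
  have hpd : p t - p t' =
      (∑ l, (t l - t' l) * (Y₁ l.castSucc (Fin.last m) + Y₁ (Fin.last m) l.castSucc))
      + ∑ i, ∑ j, ((t i - t' i) * (t j - μ j) + (t' i - μ i) * (t j - t' j)) * Y₂ i j := by
    rw [hp t, hp t', trace_transpose_mul', trace_transpose_mul', trace_transpose_mul',
      trace_transpose_mul', Bmat_sum, Bmat_sum]
    simp only [Matrix.vecMulVec_apply]
    have hS : (∑ l, ((t l - μ l) * Y₁ l.castSucc (Fin.last m)
              + (t l - μ l) * Y₁ (Fin.last m) l.castSucc))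
          - (∑ l, ((t' l - μ l) * Y₁ l.castSucc (Fin.last m)
              + (t' l - μ l) * Y₁ (Fin.last m) l.castSucc))
        = ∑ l, (t l - t' l) * (Y₁ l.castSucc (Fin.last m) + Y₁ (Fin.last m) l.castSucc) := by
      rw [← Finset.sum_sub_distrib]
      exact Finset.sum_congr rfl fun l _ => by ring
    have hQ : (∑ i, ∑ j, (t i - μ i) * (t j - μ j) * Y₂ i j)
          - (∑ i, ∑ j, (t' i - μ i) * (t' j - μ j) * Y₂ i j)
        = ∑ i, ∑ j, ((t i - t' i) * (t j - μ j) + (t' i - μ i) * (t j - t' j)) * Y₂ i j := by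
      rw [← Finset.sum_sub_distrib]
      refine Finset.sum_congr rfl fun i _ => ?_
      rw [← Finset.sum_sub_distrib]
      exact Finset.sum_congr rfl fun j _ => by ring
    linarith
  have hsplit1 : (∑ l, (t l - t' l) * (Y₁ l.castSucc (Fin.last m) + Y₁ (Fin.last m) l.castSucc))
      = (∑ l, (t l - t' l) * Y₁ l.castSucc (Fin.last m))
        + ∑ l, (t l - t' l) * Y₁ (Fin.last m) l.castSucc := by
    rw [← Finset.sum_add_distrib]
    exact Finset.sum_congr rfl fun l _ => by ring
  have hsplit2 : (∑ i, ∑ j, ((t i - t' i) * (t j - μ j) + (t' i - μ i) * (t j - t' j)) * Y₂ i j)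
      = (∑ i, ∑ j, (t i - t' i) * (t j - μ j) * Y₂ i j)
        + ∑ i, ∑ j, (t' i - μ i) * (t j - t' j) * Y₂ i j := by
    rw [← Finset.sum_add_distrib]
    refine Finset.sum_congr rfl fun i _ => ?_
    rw [← Finset.sum_add_distrib]
    exact Finset.sum_congr rfl fun j _ => by ring
  -- bounds on the coordinates
  have hvle : Real.sqrt (∑ j, (t j - μ j) ^ 2) ≤ Real.sqrt m * (M - μmin) := by
    have h1 : ∑ j, (t j - μ j) ^ 2 ≤ (m : ℝ) * (M - μmin) ^ 2 := by
      calc ∑ j, (t j - μ j) ^ 2 ≤ ∑ _j : Fin m, (M - μmin) ^ 2 := by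
            refine Finset.sum_le_sum fun j _ => sq_le_sq' ?_ ?_
            · have := (ht j).1; have := (hμ j).2; linarith
            · have := (ht j).2; have := hμmin_le j; linarith
        _ = (m : ℝ) * (M - μmin) ^ 2 := by
            rw [Finset.sum_const, Finset.card_univ, Fintype.card_fin, nsmul_eq_mul]
    calc Real.sqrt (∑ j, (t j - μ j) ^ 2) ≤ Real.sqrt ((m : ℝ) * (M - μmin) ^ 2) :=
          Real.sqrt_le_sqrt h1
      _ = Real.sqrt m * (M - μmin) := by
          rw [Real.sqrt_mul (Nat.cast_nonneg m), Real.sqrt_sq hMμ]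
  have hwle : Real.sqrt (∑ j, (t' j - μ j) ^ 2) ≤ Real.sqrt m * (M - μmin) := by
    have h1 : ∑ j, (t' j - μ j) ^ 2 ≤ (m : ℝ) * (M - μmin) ^ 2 := by
      calc ∑ j, (t' j - μ j) ^ 2 ≤ ∑ _j : Fin m, (M - μmin) ^ 2 := by
            refine Finset.sum_le_sum fun j _ => sq_le_sq' ?_ ?_
            · have := (ht' j).1; have := (hμ j).2; linarith
            · have := (ht' j).2; have := hμmin_le j; linarith
        _ = (m : ℝ) * (M - μmin) ^ 2 := by
            rw [Finset.sum_const, Finset.card_univ, Fintype.card_fin, nsmul_eq_mul]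
    calc Real.sqrt (∑ j, (t' j - μ j) ^ 2) ≤ Real.sqrt ((m : ℝ) * (M - μmin) ^ 2) :=
          Real.sqrt_le_sqrt h1
      _ = Real.sqrt m * (M - μmin) := by
          rw [Real.sqrt_mul (Nat.cast_nonneg m), Real.sqrt_sq hMμ]
  have htr1 : 0 ≤ Y₁.trace := psd_trace_nonneg hY₁
  have htr2 : 0 ≤ Y₂.trace := psd_trace_nonneg hY₂
  -- the four bounds
  have hA := S1_bound hY₁ (fun l => t l - t' l)
  have hB := S1_bound' hY₁ (fun l => t l - t' l)
  have hC := quad_bound hY₂ (fun i => t i - t' i) (fun j => t j - μ j)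
  have hD := quad_bound hY₂ (fun i => t' i - μ i) (fun j => t j - t' j)
  have hC' : |∑ i, ∑ j, (t i - t' i) * (t j - μ j) * Y₂ i j|
      ≤ Y₂.trace * (N * (Real.sqrt m * (M - μmin))) := by
    refine hC.trans ?_
    exact mul_le_mul_of_nonneg_left (mul_le_mul_of_nonneg_left hvle hN0) htr2
  have hD' : |∑ i, ∑ j, (t' i - μ i) * (t j - t' j) * Y₂ i j|
      ≤ Y₂.trace * ((Real.sqrt m * (M - μmin)) * N) := by
    refine hD.trans ?_
    exact mul_le_mul_of_nonneg_left (mul_le_mul_of_nonneg_right hwle hN0) htr2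
  rw [hnorm, hpd, hsplit1, hsplit2]
  have tri : ∀ a b c d : ℝ, |a + b + (c + d)| ≤ |a| + |b| + |c| + |d| := by
    intro a b c d
    calc |a + b + (c + d)| ≤ |a + b| + |c + d| := abs_add_le _ _
      _ ≤ |a| + |b| + (|c| + |d|) := add_le_add (abs_add_le _ _) (abs_add_le _ _)
      _ = |a| + |b| + |c| + |d| := by ring
  refine (tri _ _ _ _).trans ?_
  simp only at hA hB hC' hD'
  nlinarith [hA, hB, hC', hD']
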